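/- Let η ∈ (0,1), and suppose Q(t+1) = η·Q(t) + (1-η)Γ + P(t) with P(t) ∈ [P_min, P_max] for all t. Then for any n and any t with nT ≤ t ≤ (n+1)T - 1: Q(t)·((1-η)Γ + P(t)) ≤ η^{t-nT}·Q(nT)·((1-η)Γ + P(t)) + ((1-η^{t-nT})/(1-η))·M_B, where M_B := max{((1-η)Γ + P_min)², ((1-η)Γ + P_max)²}. -/
import Mathlib

lemma prod_le_maxsq (a b x c M : ℝ) (hx1 : a ≤ x) (hx2 : x ≤ b)
    (hc1 : a ≤ c) (hc2 : c ≤ b) (hM : M = max (a ^ 2) (b ^ 2)) :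
    x * c ≤ M := by
  have h1 : a ^ 2 ≤ M := hM ▸ le_max_left _ _
  have h2 : b ^ 2 ≤ M := hM ▸ le_max_right _ _
  have hsq : ∀ y : ℝ, a ≤ y → y ≤ b → y ^ 2 ≤ M := by
    intro y hy1 hy2
    rcases le_total (|a|) (|b|) with h | h
    · have hyb : |y| ≤ |b| := by
        rw [abs_le]
        refine ⟨by linarith [neg_abs_le a, le_abs_self a], by linarith [le_abs_self b]⟩
      calc y ^ 2 = |y| ^ 2 := (sq_abs y).symm
        _ ≤ |b| ^ 2 := by nlinarith [abs_nonneg y]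
        _ = b ^ 2 := sq_abs b
        _ ≤ M := h2
    · have hya : |y| ≤ |a| := by
        rw [abs_le]
        refine ⟨by linarith [neg_abs_le a], by linarith [le_abs_self b, le_abs_self a]⟩
      calc y ^ 2 = |y| ^ 2 := (sq_abs y).symm
        _ ≤ |a| ^ 2 := by nlinarith [abs_nonneg y]
        _ = a ^ 2 := sq_abs a
        _ ≤ M := h1
  nlinarith [sq_nonneg (x - c), hsq x hx1 hx2, hsq c hc1 hc2]

lemma aux_bound (η Γ Pmin Pmax : ℝ) (Q P : ℕ → ℝ)
    (hη0 : 0 < η) (hη1 : η < 1)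
    (hrec : ∀ t, Q (t + 1) = η * Q t + (1 - η) * Γ + P t)
    (hP : ∀ t, Pmin ≤ P t ∧ P t ≤ Pmax)
    (m : ℕ) (c : ℝ) (hc1 : (1 - η) * Γ + Pmin ≤ c) (hc2 : c ≤ (1 - η) * Γ + Pmax) :
    ∀ d, Q (m + d) * c ≤ η ^ d * Q m * c +
      (∑ i ∈ Finset.range d, η ^ i) *
        max (((1 - η) * Γ + Pmin) ^ 2) (((1 - η) * Γ + Pmax) ^ 2) := by
  set M := max (((1 - η) * Γ + Pmin) ^ 2) (((1 - η) * Γ + Pmax) ^ 2) with hM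
  intro d
  induction d with
  | zero => simp
  | succ d ih =>
    have hx1 : (1 - η) * Γ + Pmin ≤ (1 - η) * Γ + P (m + d) := by
      linarith [(hP (m + d)).1]
    have hx2 : (1 - η) * Γ + P (m + d) ≤ (1 - η) * Γ + Pmax := by
      linarith [(hP (m + d)).2]
    have hxc : ((1 - η) * Γ + P (m + d)) * c ≤ M :=
      prod_le_maxsq _ _ _ _ _ hx1 hx2 hc1 hc2 hM
    have hq : Q (m + (d + 1)) = η * Q (m + d) + ((1 - η) * Γ + P (m + d)) := by
      have := hrec (m + d); rw [show m + (d + 1) = (m + d) + 1 by ring, this]; ring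
    rw [hq, geom_sum_succ, show η ^ (d + 1) = η * η ^ d from by ring]
    have h := mul_le_mul_of_nonneg_left ih (le_of_lt hη0)
    nlinarith [h, hxc]

/-- Stale-queue error bound in the two-scale drift analysis: for
`nT ≤ t ≤ (n+1)T - 1`,
`Q(t)·((1-η)Γ + P(t)) ≤ η^{t-nT}·Q(nT)·((1-η)Γ + P(t)) + ((1-η^{t-nT})/(1-η))·M_B`. -/
theorem stmt_10 (η Γ Pmin Pmax : ℝ) (T : ℕ) (Q P : ℕ → ℝ)
    (hη0 : 0 < η) (hη1 : η < 1) (hT : 1 ≤ T)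
    (hrec : ∀ t, Q (t + 1) = η * Q t + (1 - η) * Γ + P t)
    (hP : ∀ t, Pmin ≤ P t ∧ P t ≤ Pmax) :
    ∀ n t, n * T ≤ t → t ≤ (n + 1) * T - 1 →
      Q t * ((1 - η) * Γ + P t)
        ≤ η ^ (t - n * T) * Q (n * T) * ((1 - η) * Γ + P t)
          + ((1 - η ^ (t - n * T)) / (1 - η)) *
            max (((1 - η) * Γ + Pmin) ^ 2) (((1 - η) * Γ + Pmax) ^ 2) := by
  intro n t h1 _
  set d := t - n * T with hd
  have ht : t = n * T + d := by omega
  have hc1 : (1 - η) * Γ + Pmin ≤ (1 - η) * Γ + P t := by linarith [(hP t).1]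
  have hc2 : (1 - η) * Γ + P t ≤ (1 - η) * Γ + Pmax := by linarith [(hP t).2]
  have key := aux_bound η Γ Pmin Pmax Q P hη0 hη1 hrec hP (n * T) _ hc1 hc2 d
  rw [← ht] at key
  have hgeom : (∑ i ∈ Finset.range d, η ^ i) = (1 - η ^ d) / (1 - η) := by
    rw [geom_sum_eq (ne_of_lt hη1)]
    rw [div_eq_div_iff (by linarith) (by linarith)]
    ring
  rw [hgeom] at key
  exact key
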